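/- Let m_B, m_E be positive integers, K_{B,1}, K_{B,2}, K_{E,1}, K_{E,2} > 0, ρ_{E,1}, ρ_{E,2} > 0, c₁, c₂ > 0 real, and p_B, p_E ∈ [0,1]. For s > 0, let f_B^{(s)} be the ARS PDF with parameters (p_B, m_B, K_{B,1}, K_{B,2}, c₁·s, c₂·s), and let F_E^{ARS} be the ARS CDF with parameters (p_E, m_E, K_{E,1}, K_{E,2}, ρ_{E,1}, ρ_{E,2}). Then I₁(s) = ∫₀^∞ ln(1+γ)·f_B^{(s)}(γ)·F_E^{ARS}(γ) dγ satisfies lim_{s→∞} I₁(s) / log₂(s) = ln 2. -/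

import Mathlib

open MeasureTheory Filter Finset Real Set

lemma integrableOn_pow_mul_exp {r : ℝ} (hr : 0 < r) (b : ℕ) :
    IntegrableOn (fun x : ℝ => x ^ b * Real.exp (-x / r)) (Set.Ioi 0) := by
  have h := integrableOn_rpow_mul_exp_neg_mul_rpow (s := (b:ℝ)) (p := 1)
    (by exact lt_of_lt_of_le (by norm_num) (Nat.cast_nonneg b)) one_pos (inv_pos.mpr hr)
  refine h.congr_fun (fun x hx => ?_) measurableSet_Ioi
  beta_reduce
  rw [Real.rpow_one, Real.rpow_natCast]
  congr 1
  ring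

lemma integral_pow_mul_exp {r : ℝ} (hr : 0 < r) (b : ℕ) :
    ∫ x in Set.Ioi (0:ℝ), x ^ b * Real.exp (-x / r) = (b.factorial : ℝ) * r ^ (b + 1) := by
  have h := integral_rpow_mul_exp_neg_mul_Ioi (a := (b:ℝ)+1) (r := r⁻¹)
    (by positivity) (inv_pos.mpr hr)
  rw [one_div, inv_inv, Real.Gamma_nat_eq_factorial] at h
  have h2 : r ^ ((b:ℝ)+1) = r ^ (b+1) := by
    rw [show ((b:ℝ)+1) = ((b+1:ℕ):ℝ) by push_cast; ring, Real.rpow_natCast]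
  rw [h2] at h
  have h3 : ∫ x in Set.Ioi (0:ℝ), x ^ b * Real.exp (-x / r)
      = ∫ t in Set.Ioi (0:ℝ), t ^ ((b:ℝ)+1-1) * Real.exp (-(r⁻¹ * t)) := by
    apply setIntegral_congr_fun measurableSet_Ioi
    intro x hx
    simp only [add_sub_cancel_right, Real.rpow_natCast]
    congr 1
    ring
  rw [h3, h, mul_comm]

lemma tendsto_pow_mul_exp_div {r : ℝ} (hr : 0 < r) (k : ℕ) :
    Tendsto (fun x : ℝ => x ^ k * Real.exp (-x / r)) atTop (nhds 0) := by
  have h := tendsto_rpow_mul_exp_neg_mul_atTop_nhds_zero (k : ℝ) r⁻¹ (inv_pos.mpr hr)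
  refine h.congr fun x => ?_
  rw [Real.rpow_natCast]
  congr 1
  ring

lemma integrableOn_log_mul_pow_mul_exp {r : ℝ} (hr : 0 < r) (b : ℕ) :
    IntegrableOn (fun x : ℝ => Real.log (1+x) * (x ^ b * Real.exp (-x / r))) (Set.Ioi 0) := by
  apply (integrableOn_pow_mul_exp hr (b+1)).mono'
  · apply ContinuousOn.aestronglyMeasurable _ measurableSet_Ioi
    apply ContinuousOn.mul
    · intro x hx
      exact ((Real.continuousAt_log (by simp at hx; positivity)).comp
        (by fun_prop)).continuousWithinAt
    · fun_prop
  · rw [ae_restrict_iff' measurableSet_Ioi]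
    refine ae_of_all _ fun x hx => ?_
    simp only [Set.mem_Ioi] at hx
    have h1 : (0:ℝ) ≤ Real.log (1+x) := Real.log_nonneg (by linarith)
    have h2 : Real.log (1+x) ≤ x := by
      have := Real.log_le_sub_one_of_pos (show (0:ℝ) < 1+x by linarith)
      linarith
    rw [Real.norm_eq_abs, abs_of_nonneg (by positivity)]
    calc Real.log (1+x) * (x ^ b * Real.exp (-x/r))
        ≤ x * (x ^ b * Real.exp (-x/r)) := by
          apply mul_le_mul_of_nonneg_right h2 (by positivity)
      _ = x ^ (b+1) * Real.exp (-x/r) := by ring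


/-- Coefficients `B_n(m,K)` of the integer-parameter Rician shadowed model. -/
noncomputable def Bcoef (m : ℕ) (K : ℝ) (n : ℕ) : ℝ :=
  ((m - 1).choose n : ℝ) * ((m : ℝ) / (K + m)) ^ n * (K / (K + m)) ^ (m - 1 - n)

/-- Integer-parameter Rician shadowed PDF with parameters `(m, K, ρ)`. -/
noncomputable def rsPDF (m : ℕ) (K ρ : ℝ) (γ : ℝ) : ℝ :=
  ∑ n ∈ Finset.range m,
    Bcoef m K n * γ ^ (m - n - 1) * Real.exp (-γ / ρ) /
      (ρ ^ (m - n) * ((m - n - 1).factorial : ℝ))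

/-- Integer-parameter Rician shadowed CDF with parameters `(m, K, ρ)`. -/
noncomputable def rsCDF (m : ℕ) (K ρ : ℝ) (γ : ℝ) : ℝ :=
  ∑ j ∈ Finset.range m,
    Bcoef m K j *
      (1 - Real.exp (-γ / ρ) *
        ∑ k ∈ Finset.range (m - j), γ ^ k / (ρ ^ k * (k.factorial : ℝ)))

lemma Bcoef_nonneg {m : ℕ} {K : ℝ} (hK : 0 ≤ K) (n : ℕ) : 0 ≤ Bcoef m K n := by
  unfold Bcoef
  have h : (0:ℝ) ≤ K + m := by positivity
  positivity

lemma Bcoef_sum {m : ℕ} (hm : 0 < m) {K : ℝ} (hK : 0 < K) :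
    ∑ n ∈ Finset.range m, Bcoef m K n = 1 := by
  have hKm : K + (m:ℝ) ≠ 0 := by positivity
  have h := add_pow ((m:ℝ)/(K+m)) (K/(K+m)) (m-1)
  rw [Nat.sub_add_cancel hm] at h
  have hx : (m:ℝ)/(K+m) + K/(K+m) = 1 := by field_simp; ring
  rw [hx, one_pow] at h
  rw [h]
  apply Finset.sum_congr rfl
  intro n hn
  unfold Bcoef
  ring

lemma rsPDF_nonneg {m : ℕ} {K ρ : ℝ} (hK : 0 ≤ K) (hρ : 0 < ρ) {γ : ℝ} (hγ : 0 ≤ γ) :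
    0 ≤ rsPDF m K ρ γ := by
  apply Finset.sum_nonneg
  intro n _
  have hB := Bcoef_nonneg hK (m := m) n
  positivity

lemma rsPDF_integrableOn {m : ℕ} {K ρ : ℝ} (hρ : 0 < ρ) :
    IntegrableOn (fun γ => rsPDF m K ρ γ) (Set.Ioi 0) := by
  unfold rsPDF
  apply integrable_finset_sum
  intro n _
  have h1 : (fun γ : ℝ => Bcoef m K n * γ ^ (m-n-1) * Real.exp (-γ/ρ) /
      (ρ ^ (m-n) * ((m-n-1).factorial:ℝ)))
      = fun γ => (Bcoef m K n / (ρ ^ (m-n) * ((m-n-1).factorial:ℝ)))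
        * (γ ^ (m-n-1) * Real.exp (-γ/ρ)) := by
    funext γ; ring
  rw [h1]
  exact (integrableOn_pow_mul_exp hρ _).const_mul _

lemma rsPDF_log_integrableOn {m : ℕ} {K ρ : ℝ} (hρ : 0 < ρ) :
    IntegrableOn (fun γ => Real.log (1+γ) * rsPDF m K ρ γ) (Set.Ioi 0) := by
  have h1 : (fun γ : ℝ => Real.log (1+γ) * rsPDF m K ρ γ)
      = fun γ => ∑ n ∈ Finset.range m,
          (Bcoef m K n / (ρ ^ (m-n) * ((m-n-1).factorial:ℝ)))
            * (Real.log (1+γ) * (γ ^ (m-n-1) * Real.exp (-γ/ρ))) := by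
    funext γ
    unfold rsPDF
    rw [Finset.mul_sum]
    apply Finset.sum_congr rfl
    intro n _
    ring
  rw [h1]
  apply integrable_finset_sum
  intro n _
  exact (integrableOn_log_mul_pow_mul_exp hρ _).const_mul _

lemma rsPDF_integral {m : ℕ} (hm : 0 < m) {K ρ : ℝ} (hK : 0 < K) (hρ : 0 < ρ) :
    ∫ γ in Set.Ioi (0:ℝ), rsPDF m K ρ γ = 1 := by
  unfold rsPDF
  rw [integral_finset_sum _ (fun n _ => by
    have h1 : (fun γ : ℝ => Bcoef m K n * γ ^ (m-n-1) * Real.exp (-γ/ρ) /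
        (ρ ^ (m-n) * ((m-n-1).factorial:ℝ)))
        = fun γ => (Bcoef m K n / (ρ ^ (m-n) * ((m-n-1).factorial:ℝ)))
          * (γ ^ (m-n-1) * Real.exp (-γ/ρ)) := by
      funext γ; ring
    rw [h1]
    exact ((integrableOn_pow_mul_exp hρ _).const_mul _ : Integrable _ _))]
  rw [← Bcoef_sum hm hK]
  apply Finset.sum_congr rfl
  intro n hn
  have hn' : n < m := Finset.mem_range.mp hn
  have h1 : (fun γ : ℝ => Bcoef m K n * γ ^ (m-n-1) * Real.exp (-γ/ρ) /
      (ρ ^ (m-n) * ((m-n-1).factorial:ℝ)))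
      = fun γ => (Bcoef m K n / (ρ ^ (m-n) * ((m-n-1).factorial:ℝ)))
        * (γ ^ (m-n-1) * Real.exp (-γ/ρ)) := by
    funext γ; ring
  rw [h1, integral_const_mul, integral_pow_mul_exp hρ]
  have h2 : m - n - 1 + 1 = m - n := by omega
  rw [h2]
  have hden : (ρ ^ (m-n) * ((m-n-1).factorial:ℝ)) ≠ 0 := by positivity
  calc Bcoef m K n / (ρ ^ (m-n) * ((m-n-1).factorial:ℝ))
        * (((m-n-1).factorial:ℝ) * ρ ^ (m-n))
      = Bcoef m K n * ((ρ ^ (m-n) * ((m-n-1).factorial:ℝ))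
          / (ρ ^ (m-n) * ((m-n-1).factorial:ℝ))) := by ring
    _ = Bcoef m K n := by rw [div_self hden, mul_one]

lemma rsCDF_nonneg {m : ℕ} {K ρ : ℝ} (hK : 0 ≤ K) (hρ : 0 < ρ) {γ : ℝ} (hγ : 0 ≤ γ) :
    0 ≤ rsCDF m K ρ γ := by
  apply Finset.sum_nonneg
  intro j _
  apply mul_nonneg (Bcoef_nonneg hK j)
  rw [sub_nonneg]
  have h1 : ∑ k ∈ Finset.range (m-j), γ ^ k / (ρ ^ k * (k.factorial:ℝ))
      ≤ Real.exp (γ/ρ) := by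
    calc ∑ k ∈ Finset.range (m-j), γ ^ k / (ρ ^ k * (k.factorial:ℝ))
        = ∑ k ∈ Finset.range (m-j), (γ/ρ) ^ k / (k.factorial:ℝ) := by
          apply Finset.sum_congr rfl
          intro k _
          rw [div_pow]
          ring
      _ ≤ Real.exp (γ/ρ) := Real.sum_le_exp_of_nonneg (by positivity) _
  calc Real.exp (-γ/ρ) * ∑ k ∈ Finset.range (m-j), γ ^ k / (ρ ^ k * (k.factorial:ℝ))
      ≤ Real.exp (-γ/ρ) * Real.exp (γ/ρ) := by
        apply mul_le_mul_of_nonneg_left h1 (Real.exp_nonneg _)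
    _ = 1 := by rw [← Real.exp_add]; simp [neg_div]

lemma rsCDF_le_one {m : ℕ} (hm : 0 < m) {K ρ : ℝ} (hK : 0 < K) (hρ : 0 < ρ) {γ : ℝ}
    (hγ : 0 ≤ γ) : rsCDF m K ρ γ ≤ 1 := by
  calc rsCDF m K ρ γ ≤ ∑ j ∈ Finset.range m, Bcoef m K j := by
        apply Finset.sum_le_sum
        intro j _
        have h2 : 0 ≤ Real.exp (-γ/ρ) * ∑ k ∈ Finset.range (m-j),
            γ ^ k / (ρ ^ k * (k.factorial:ℝ)) := by positivity
        calc Bcoef m K j * (1 - Real.exp (-γ/ρ) * ∑ k ∈ Finset.range (m-j),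
              γ ^ k / (ρ ^ k * (k.factorial:ℝ)))
            ≤ Bcoef m K j * 1 := by
              apply mul_le_mul_of_nonneg_left (by linarith) (Bcoef_nonneg hK.le j)
          _ = Bcoef m K j := mul_one _
    _ = 1 := Bcoef_sum hm hK

lemma rsCDF_tendsto {m : ℕ} (hm : 0 < m) {K ρ : ℝ} (hK : 0 < K) (hρ : 0 < ρ) :
    Tendsto (fun γ => rsCDF m K ρ γ) atTop (nhds 1) := by
  have h : Tendsto (fun γ => rsCDF m K ρ γ) atTop
      (nhds (∑ j ∈ Finset.range m, Bcoef m K j * (1 - 0))) := by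
    unfold rsCDF
    apply tendsto_finset_sum
    intro j _
    apply Tendsto.const_mul
    apply Tendsto.const_sub
    have h2 : Tendsto (fun γ : ℝ => ∑ k ∈ Finset.range (m-j),
        Real.exp (-γ/ρ) * (γ ^ k / (ρ ^ k * (k.factorial:ℝ)))) atTop
        (nhds (∑ k ∈ Finset.range (m-j), 0)) := by
      apply tendsto_finset_sum
      intro k _
      have h3 : Tendsto (fun γ : ℝ => (ρ ^ k * (k.factorial:ℝ))⁻¹
          * (γ ^ k * Real.exp (-γ/ρ))) atTop (nhds ((ρ ^ k * (k.factorial:ℝ))⁻¹ * 0)) :=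
        (tendsto_pow_mul_exp_div hρ k).const_mul _
      rw [mul_zero] at h3
      refine h3.congr fun γ => ?_
      ring
    rw [Finset.sum_const_zero] at h2
    refine h2.congr fun γ => ?_
    rw [Finset.mul_sum]
  rw [show ∑ j ∈ Finset.range m, Bcoef m K j * (1 - 0) = 1 from by
    simp only [sub_zero, mul_one]; exact Bcoef_sum hm hK] at h
  exact h

lemma rsPDF_scale {m : ℕ} {K c s : ℝ} (hc : c ≠ 0) (hs : s ≠ 0) (u : ℝ) :
    s * rsPDF m K (c*s) (s*u) = rsPDF m K c u := by
  unfold rsPDF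
  rw [Finset.mul_sum]
  apply Finset.sum_congr rfl
  intro n hn
  have hn' : n < m := Finset.mem_range.mp hn
  obtain ⟨a, ha⟩ : ∃ a, m - n = a + 1 := ⟨m - n - 1, by omega⟩
  rw [ha]
  simp only [Nat.add_sub_cancel]
  rw [show -(s*u)/(c*s) = -u/c from by field_simp]
  rw [mul_pow, mul_pow]
  have hfac : ((a).factorial : ℝ) ≠ 0 := Nat.cast_ne_zero.mpr a.factorial_ne_zero
  field_simp
  ring

lemma rsPDF_continuous (m : ℕ) (K ρ : ℝ) : Continuous (rsPDF m K ρ) := by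
  unfold rsPDF
  apply continuous_finset_sum
  intro n _
  fun_prop

lemma rsCDF_continuous (m : ℕ) (K ρ : ℝ) : Continuous (rsCDF m K ρ) := by
  unfold rsCDF
  apply continuous_finset_sum
  intro j _
  apply Continuous.mul continuous_const
  apply Continuous.sub continuous_const
  apply Continuous.mul (by fun_prop)
  apply continuous_finset_sum
  intro k _
  fun_prop


/-- Alternate Rician Shadowed (ARS) PDF with parameters `(p, m, K₁, K₂, ρ₁, ρ₂)`. -/
noncomputable def arsPDF (p : ℝ) (m : ℕ) (K₁ K₂ ρ₁ ρ₂ : ℝ) (γ : ℝ) : ℝ :=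
  p * rsPDF m K₁ ρ₁ γ + (1 - p) * rsPDF m K₂ ρ₂ γ

/-- Alternate Rician Shadowed (ARS) CDF with parameters `(p, m, K₁, K₂, ρ₁, ρ₂)`. -/
noncomputable def arsCDF (p : ℝ) (m : ℕ) (K₁ K₂ ρ₁ ρ₂ : ℝ) (γ : ℝ) : ℝ :=
  p * rsCDF m K₁ ρ₁ γ + (1 - p) * rsCDF m K₂ ρ₂ γ

section ARS
variable {p : ℝ} {m : ℕ} {K₁ K₂ ρ₁ ρ₂ : ℝ}

lemma arsPDF_nonneg (hp0 : 0 ≤ p) (hp1 : p ≤ 1) (hK₁ : 0 ≤ K₁) (hK₂ : 0 ≤ K₂)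
    (hρ₁ : 0 < ρ₁) (hρ₂ : 0 < ρ₂) {γ : ℝ} (hγ : 0 ≤ γ) :
    0 ≤ arsPDF p m K₁ K₂ ρ₁ ρ₂ γ :=
  add_nonneg (mul_nonneg hp0 (rsPDF_nonneg hK₁ hρ₁ hγ))
    (mul_nonneg (by linarith) (rsPDF_nonneg hK₂ hρ₂ hγ))

lemma arsPDF_integrableOn (hρ₁ : 0 < ρ₁) (hρ₂ : 0 < ρ₂) :
    IntegrableOn (fun γ => arsPDF p m K₁ K₂ ρ₁ ρ₂ γ) (Set.Ioi 0) :=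
  (((rsPDF_integrableOn hρ₁).const_mul p).add
    ((rsPDF_integrableOn hρ₂).const_mul (1-p)))

lemma arsPDF_log_integrableOn (hρ₁ : 0 < ρ₁) (hρ₂ : 0 < ρ₂) :
    IntegrableOn (fun γ => Real.log (1+γ) * arsPDF p m K₁ K₂ ρ₁ ρ₂ γ) (Set.Ioi 0) := by
  have h : IntegrableOn (fun γ : ℝ => p * (Real.log (1+γ) * rsPDF m K₁ ρ₁ γ)
      + (1-p) * (Real.log (1+γ) * rsPDF m K₂ ρ₂ γ)) (Set.Ioi 0) :=
    (((rsPDF_log_integrableOn hρ₁ (m := m) (K := K₁)).const_mul p).add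
      ((rsPDF_log_integrableOn hρ₂ (m := m) (K := K₂)).const_mul (1-p)))
  refine IntegrableOn.congr_fun h (fun γ _ => ?_) measurableSet_Ioi
  unfold arsPDF
  ring

lemma arsPDF_integral (hm : 0 < m) (hK₁ : 0 < K₁) (hK₂ : 0 < K₂)
    (hρ₁ : 0 < ρ₁) (hρ₂ : 0 < ρ₂) :
    ∫ γ in Set.Ioi (0:ℝ), arsPDF p m K₁ K₂ ρ₁ ρ₂ γ = 1 := by
  unfold arsPDF
  rw [integral_add ((rsPDF_integrableOn hρ₁).const_mul p)
    ((rsPDF_integrableOn hρ₂).const_mul (1-p)), integral_const_mul, integral_const_mul,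
    rsPDF_integral hm hK₁ hρ₁, rsPDF_integral hm hK₂ hρ₂]
  ring

lemma arsCDF_nonneg (hp0 : 0 ≤ p) (hp1 : p ≤ 1) (hK₁ : 0 ≤ K₁) (hK₂ : 0 ≤ K₂)
    (hρ₁ : 0 < ρ₁) (hρ₂ : 0 < ρ₂) {γ : ℝ} (hγ : 0 ≤ γ) :
    0 ≤ arsCDF p m K₁ K₂ ρ₁ ρ₂ γ :=
  add_nonneg (mul_nonneg hp0 (rsCDF_nonneg hK₁ hρ₁ hγ))
    (mul_nonneg (by linarith) (rsCDF_nonneg hK₂ hρ₂ hγ))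

lemma arsCDF_le_one (hm : 0 < m) (hp0 : 0 ≤ p) (hp1 : p ≤ 1) (hK₁ : 0 < K₁) (hK₂ : 0 < K₂)
    (hρ₁ : 0 < ρ₁) (hρ₂ : 0 < ρ₂) {γ : ℝ} (hγ : 0 ≤ γ) :
    arsCDF p m K₁ K₂ ρ₁ ρ₂ γ ≤ 1 := by
  unfold arsCDF
  have h1 := rsCDF_le_one hm hK₁ hρ₁ hγ (ρ := ρ₁)
  have h2 := rsCDF_le_one hm hK₂ hρ₂ hγ (ρ := ρ₂)
  nlinarith [rsCDF_nonneg hK₁.le hρ₁ hγ (m := m), rsCDF_nonneg hK₂.le hρ₂ hγ (m := m)]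

lemma arsCDF_tendsto (hm : 0 < m) (hK₁ : 0 < K₁) (hK₂ : 0 < K₂)
    (hρ₁ : 0 < ρ₁) (hρ₂ : 0 < ρ₂) :
    Tendsto (fun γ => arsCDF p m K₁ K₂ ρ₁ ρ₂ γ) atTop (nhds 1) := by
  have h := ((rsCDF_tendsto hm hK₁ hρ₁).const_mul p).add
    ((rsCDF_tendsto hm hK₂ hρ₂).const_mul (1-p))
  rw [show p * 1 + (1-p) * 1 = 1 from by ring] at h
  exact h

lemma arsPDF_scale {c₁ c₂ s : ℝ} (hc₁ : c₁ ≠ 0) (hc₂ : c₂ ≠ 0) (hs : s ≠ 0) (u : ℝ) :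
    s * arsPDF p m K₁ K₂ (c₁*s) (c₂*s) (s*u) = arsPDF p m K₁ K₂ c₁ c₂ u := by
  unfold arsPDF
  rw [mul_add, show s * (p * rsPDF m K₁ (c₁*s) (s*u)) = p * (s * rsPDF m K₁ (c₁*s) (s*u))
    from by ring, show s * ((1-p) * rsPDF m K₂ (c₂*s) (s*u))
    = (1-p) * (s * rsPDF m K₂ (c₂*s) (s*u)) from by ring,
    rsPDF_scale hc₁ hs, rsPDF_scale hc₂ hs]

lemma arsPDF_continuous : Continuous (arsPDF p m K₁ K₂ ρ₁ ρ₂) :=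
  (continuous_const.mul (rsPDF_continuous m K₁ ρ₁)).add
    (continuous_const.mul (rsPDF_continuous m K₂ ρ₂))

lemma arsCDF_continuous : Continuous (arsCDF p m K₁ K₂ ρ₁ ρ₂) :=
  (continuous_const.mul (rsCDF_continuous m K₁ ρ₁)).add
    (continuous_const.mul (rsCDF_continuous m K₂ ρ₂))

end ARS

/-- The component `S_{∞,1}` of the high-SNR slope of the ASC equals `ln 2`. -/
theorem asc_slope_component_I1 (mB mE : ℕ) (hmB : 0 < mB) (hmE : 0 < mE)
    (KB1 KB2 KE1 KE2 : ℝ) (hKB1 : 0 < KB1) (hKB2 : 0 < KB2)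
    (hKE1 : 0 < KE1) (hKE2 : 0 < KE2)
    (ρE1 ρE2 c1 c2 : ℝ) (hρE1 : 0 < ρE1) (hρE2 : 0 < ρE2)
    (hc1 : 0 < c1) (hc2 : 0 < c2)
    (pB pE : ℝ) (hpB : pB ∈ Set.Icc (0 : ℝ) 1) (hpE : pE ∈ Set.Icc (0 : ℝ) 1) :
    Filter.Tendsto
      (fun s : ℝ =>
        (∫ γ in Set.Ioi (0 : ℝ),
            Real.log (1 + γ) * arsPDF pB mB KB1 KB2 (c1 * s) (c2 * s) γ *
              arsCDF pE mE KE1 KE2 ρE1 ρE2 γ) / Real.logb 2 s)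
      Filter.atTop (nhds (Real.log 2)) := by
  obtain ⟨hpB0, hpB1⟩ := hpB
  obtain ⟨hpE0, hpE1⟩ := hpE
  set g : ℝ → ℝ := arsPDF pB mB KB1 KB2 c1 c2 with hg
  set C : ℝ → ℝ := arsCDF pE mE KE1 KE2 ρE1 ρE2 with hCdef
  set F : ℝ → ℝ → ℝ := fun s u => Real.log (1+s*u) * g u * C (s*u) / Real.log s with hF
  have hgint : IntegrableOn g (Set.Ioi 0) := arsPDF_integrableOn hc1 hc2
  have hglog : IntegrableOn (fun u => Real.log (1+u) * g u) (Set.Ioi 0) :=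
    arsPDF_log_integrableOn hc1 hc2
  have hgone : ∫ u in Set.Ioi (0:ℝ), g u = 1 := arsPDF_integral hmB hKB1 hKB2 hc1 hc2
  have hg0 : ∀ u : ℝ, 0 ≤ u → 0 ≤ g u :=
    fun u hu => arsPDF_nonneg hpB0 hpB1 hKB1.le hKB2.le hc1 hc2 hu
  have hC0 : ∀ γ : ℝ, 0 ≤ γ → 0 ≤ C γ :=
    fun γ hγ => arsCDF_nonneg hpE0 hpE1 hKE1.le hKE2.le hρE1 hρE2 hγ
  have hC1 : ∀ γ : ℝ, 0 ≤ γ → C γ ≤ 1 :=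
    fun γ hγ => arsCDF_le_one hmE hpE0 hpE1 hKE1 hKE2 hρE1 hρE2 hγ
  have hCt : Tendsto C atTop (nhds 1) := arsCDF_tendsto hmE hKE1 hKE2 hρE1 hρE2
  -- Dominated convergence
  have key : Tendsto (fun s => ∫ u in Set.Ioi (0:ℝ), F s u) atTop (nhds 1) := by
    have h := MeasureTheory.tendsto_integral_filter_of_dominated_convergence
      (μ := MeasureTheory.volume.restrict (Set.Ioi 0)) (l := atTop)
      (F := F) (f := g)
      (bound := fun u => 2 * g u + (Real.log 2)⁻¹ * (Real.log (1+u) * g u))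
      ?_ ?_ ?_ ?_
    · rwa [hgone] at h
    · -- measurability
      refine Filter.Eventually.of_forall fun s => ?_
      apply Measurable.aestronglyMeasurable
      apply Measurable.div_const
      apply Measurable.mul
      apply Measurable.mul
      · exact Real.measurable_log.comp ((measurable_id.const_mul s).const_add 1)
      · exact arsPDF_continuous.measurable
      · exact arsCDF_continuous.measurable.comp (measurable_id.const_mul s)
    · -- bound
      filter_upwards [eventually_ge_atTop (2:ℝ)] with s hs
      rw [ae_restrict_iff' measurableSet_Ioi]
      refine ae_of_all _ fun u hu => ?_
      simp only [Set.mem_Ioi] at hu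
      have hs0 : (0:ℝ) < s := by linarith
      have hsu : 0 < s * u := by positivity
      have hlog2 : (0:ℝ) < Real.log 2 := Real.log_pos (by norm_num)
      have hlogs : 0 < Real.log s := Real.log_pos (by linarith)
      have hlog2s : Real.log 2 ≤ Real.log s :=
        Real.log_le_log (by norm_num) (by linarith)
      have hl1 : 0 ≤ Real.log (1+s*u) := Real.log_nonneg (by linarith)
      have hlu : 0 ≤ Real.log (1+u) := Real.log_nonneg (by linarith)
      have hFnn : 0 ≤ F s u := by
        apply div_nonneg _ hlogs.le
        exact mul_nonneg (mul_nonneg hl1 (hg0 u hu.le)) (hC0 _ hsu.le)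
      rw [Real.norm_eq_abs, abs_of_nonneg hFnn]
      have hstep1 : Real.log (1+s*u) ≤ 2 * Real.log s + Real.log (1+u) := by
        have hA : (1:ℝ)+s*u ≤ (1+s)*(1+u) := by nlinarith
        have hB : Real.log (1+s*u) ≤ Real.log ((1+s)*(1+u)) :=
          Real.log_le_log (by linarith) hA
        rw [Real.log_mul (by linarith) (by linarith)] at hB
        have hC' : Real.log (1+s) ≤ Real.log 2 + Real.log s := by
          rw [← Real.log_mul (by norm_num) (by linarith)]
          exact Real.log_le_log (by linarith) (by linarith)
        linarith
      have hnum : Real.log (1+s*u) * g u * C (s*u)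
          ≤ (2 * Real.log s + Real.log (1+u)) * g u := by
        calc Real.log (1+s*u) * g u * C (s*u)
            ≤ Real.log (1+s*u) * g u * 1 := by
              apply mul_le_mul_of_nonneg_left (hC1 _ hsu.le)
                (mul_nonneg hl1 (hg0 u hu.le))
          _ = Real.log (1+s*u) * g u := mul_one _
          _ ≤ (2 * Real.log s + Real.log (1+u)) * g u :=
              mul_le_mul_of_nonneg_right hstep1 (hg0 u hu.le)
      have hdivle : (Real.log (1+u) * g u) / Real.log s
          ≤ (Real.log (1+u) * g u) / Real.log 2 := by
        gcongr
        exact mul_nonneg hlu (hg0 u hu.le)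
      calc F s u ≤ (2 * Real.log s + Real.log (1+u)) * g u / Real.log s := by
            rw [hF]
            simp only
            gcongr
        _ = 2 * g u + (Real.log s)⁻¹ * (Real.log (1+u) * g u) := by
            field_simp
        _ ≤ 2 * g u + (Real.log 2)⁻¹ * (Real.log (1+u) * g u) := by
            rw [div_eq_inv_mul, div_eq_inv_mul] at hdivle
            linarith
    · -- bound integrable
      exact (hgint.const_mul 2).add (hglog.const_mul _)
    · -- pointwise limit
      rw [ae_restrict_iff' measurableSet_Ioi]
      refine ae_of_all _ fun u hu => ?_
      simp only [Set.mem_Ioi] at hu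
      have hA : Tendsto (fun s : ℝ => Real.log (1+s*u) / Real.log s) atTop (nhds 1) := by
        have h1 : ∀ᶠ s : ℝ in atTop, Real.log (1+s*u) / Real.log s
            = 1 + Real.log (s⁻¹+u) / Real.log s := by
          filter_upwards [eventually_ge_atTop (2:ℝ)] with s hs
          have hs0 : (0:ℝ) < s := by linarith
          have hlogs : 0 < Real.log s := Real.log_pos (by linarith)
          have hiu : (0:ℝ) < s⁻¹ + u := by positivity
          have h2 : (1:ℝ)+s*u = s * (s⁻¹+u) := by field_simp
          rw [h2, Real.log_mul hs0.ne' hiu.ne', add_div, div_self hlogs.ne']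
        have h3 : Tendsto (fun s : ℝ => Real.log (s⁻¹+u)) atTop (nhds (Real.log u)) := by
          have h4 : Tendsto (fun s : ℝ => s⁻¹+u) atTop (nhds (0+u)) :=
            tendsto_inv_atTop_zero.add tendsto_const_nhds
          rw [zero_add] at h4
          exact ((Real.continuousAt_log hu.ne').tendsto).comp h4
        have h5 : Tendsto (fun s : ℝ => Real.log (s⁻¹+u) / Real.log s) atTop (nhds 0) :=
          Tendsto.div_atTop h3 Real.tendsto_log_atTop
        have h6 : Tendsto (fun s : ℝ => 1 + Real.log (s⁻¹+u) / Real.log s) atTop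
            (nhds (1+0)) := tendsto_const_nhds.add h5
        rw [add_zero] at h6
        exact (tendsto_congr' h1).mpr h6
      have hB : Tendsto (fun s : ℝ => C (s*u)) atTop (nhds 1) :=
        hCt.comp (Tendsto.atTop_mul_const hu tendsto_id)
      have h7 : Tendsto (fun s : ℝ => (Real.log (1+s*u) / Real.log s) * (g u * C (s*u)))
          atTop (nhds (1 * (g u * 1))) :=
        hA.mul (tendsto_const_nhds.mul hB)
      rw [one_mul, mul_one] at h7
      refine h7.congr fun s => ?_
      rw [hF]
      ring
  -- Eventual equality
  have heq : ∀ᶠ s : ℝ in atTop,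
      (∫ γ in Set.Ioi (0:ℝ), Real.log (1 + γ) * arsPDF pB mB KB1 KB2 (c1 * s) (c2 * s) γ *
          arsCDF pE mE KE1 KE2 ρE1 ρE2 γ) / Real.logb 2 s
        = Real.log 2 * ∫ u in Set.Ioi (0:ℝ), F s u := by
    filter_upwards [eventually_ge_atTop (2:ℝ)] with s hs
    have hs0 : (0:ℝ) < s := by linarith
    have hlogs : 0 < Real.log s := Real.log_pos (by linarith)
    have hlog2 : (0:ℝ) < Real.log 2 := Real.log_pos (by norm_num)
    set φ : ℝ → ℝ := fun γ => Real.log (1+γ) * arsPDF pB mB KB1 KB2 (c1*s) (c2*s) γ * C γ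
      with hφ
    have hsub := integral_comp_mul_left_Ioi φ 0 hs0
    rw [mul_zero] at hsub
    have hFs : (fun u : ℝ => F s u) = fun u => s * φ (s*u) / Real.log s := by
      funext u
      have hscale := arsPDF_scale (p := pB) (m := mB) (K₁ := KB1) (K₂ := KB2)
        hc1.ne' hc2.ne' hs0.ne' u
      rw [hF, hφ, hg]
      simp only
      rw [← hscale]
      ring
    have hint : ∫ u in Set.Ioi (0:ℝ), F s u
        = (s * ∫ u in Set.Ioi (0:ℝ), φ (s*u)) / Real.log s := by
      rw [hFs, integral_div, integral_const_mul]
    rw [hint, hsub, smul_eq_mul]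
    have hI : s * (s⁻¹ * ∫ γ in Set.Ioi (0:ℝ), φ γ) = ∫ γ in Set.Ioi (0:ℝ), φ γ := by
      rw [← mul_assoc, mul_inv_cancel₀ hs0.ne', one_mul]
    rw [hI, Real.logb, div_div_eq_mul_div]
    ring
  have hfinal : Tendsto (fun s : ℝ => Real.log 2 * ∫ u in Set.Ioi (0:ℝ), F s u) atTop
      (nhds (Real.log 2 * 1)) := tendsto_const_nhds.mul key
  rw [mul_one] at hfinal
  exact Tendsto.congr' (Filter.EventuallyEq.symm heq) hfinal
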